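/- Let α < 0. Define μ(t) = 2αe^{αt}/(e^{αt}−1), β(t) = (e^{αt}−1)/(2α), and ζ(φ,t) = Σ_{ℓ=1}^∞ (e^{−μ(t)}/(1−e^{−μ(t)})) (μ(t)^ℓ/ℓ!) (1+β(t)φ)^{−ℓ}. Then for every φ ≥ 0, lim_{t→∞} ζ(φ,t) = 2|α|/(φ + 2|α|). -/

import Mathlib

open Real Filter Topology

lemma real_exp_tsum (y : ℝ) : Real.exp y = ∑' n : ℕ, y ^ n / n.factorial := by
  rw [Real.exp_eq_exp_ℝ, NormedSpace.exp_eq_tsum_div]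

lemma tsum_shift_exp (y : ℝ) :
    ∑' ℓ : ℕ, y ^ (ℓ + 1) / (ℓ + 1).factorial = Real.exp y - 1 := by
  have hs := Real.summable_pow_div_factorial y
  have h0 := Summable.tsum_eq_zero_add hs
  have : Real.exp y = y ^ 0 / (0:ℕ).factorial + ∑' ℓ : ℕ, y ^ (ℓ + 1) / (ℓ + 1).factorial := by
    rw [real_exp_tsum]; exact h0
  simp only [pow_zero, Nat.factorial_zero, Nat.cast_one, div_one] at this
  linarith

lemma slope_exp : Tendsto (fun y : ℝ => (Real.exp y - 1) / y) (𝓝[≠] (0:ℝ)) (𝓝 1) := by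
  have h := Real.hasDerivAt_exp 0
  rw [hasDerivAt_iff_tendsto_slope] at h
  simp only [Real.exp_zero] at h
  refine h.congr fun y => ?_
  simp [slope_def_field, div_eq_inv_mul]

/-- Quasi-stationary limit of the subcritical (`α < 0`) Feller diffusion conditioned on
non-extinction: the Laplace transform `ζ(φ,t)` converges to `2|α|/(φ + 2|α|)` as `t → ∞`. -/
theorem subcritical_quasistationary_limit (α : ℝ) (hα : α < 0) (μ β : ℝ → ℝ)
    (hμ : ∀ t : ℝ, μ t = 2 * α * Real.exp (α * t) / (Real.exp (α * t) - 1))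
    (hβ : ∀ t : ℝ, β t = (Real.exp (α * t) - 1) / (2 * α))
    (ζ : ℝ → ℝ → ℝ)
    (hζ : ∀ φ t : ℝ, ζ φ t =
      ∑' ℓ : ℕ, Real.exp (-(μ t)) / (1 - Real.exp (-(μ t))) *
        (μ t) ^ (ℓ + 1) / (Nat.factorial (ℓ + 1)) * (1 + β t * φ) ^ (-((ℓ : ℝ) + 1))) :
    ∀ φ : ℝ, 0 ≤ φ →
      Tendsto (fun t => ζ φ t) atTop (𝓝 (2 * |α| / (φ + 2 * |α|))) := by
  intro φ hφ
  have h2α : 2 * α < 0 := by linarith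
  -- basic positivity facts for t > 0
  have hfacts : ∀ t : ℝ, 0 < t → 0 < μ t ∧ 0 < 1 + β t * φ := by
    intro t ht
    have he0 : 0 < Real.exp (α * t) := Real.exp_pos _
    have he1 : Real.exp (α * t) < 1 := by
      rw [Real.exp_lt_one_iff]; exact mul_neg_of_neg_of_pos hα ht
    constructor
    · rw [hμ]
      exact div_pos_of_neg_of_neg (by nlinarith) (by linarith)
    · have hb : 0 < β t := by
        rw [hβ]; exact div_pos_of_neg_of_neg (by linarith) h2α
      nlinarith
  -- closed form
  have key : ∀ᶠ t in atTop, ζ φ t =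
      (Real.exp (μ t * (1 + β t * φ)⁻¹) - 1) / (Real.exp (μ t) - 1) := by
    filter_upwards [eventually_gt_atTop 0] with t ht
    obtain ⟨hm, hbp⟩ := hfacts t ht
    set m := μ t with hmdef
    set B := 1 + β t * φ with hBdef
    have hterm : ∀ ℓ : ℕ,
        Real.exp (-m) / (1 - Real.exp (-m)) * m ^ (ℓ + 1) / (Nat.factorial (ℓ + 1))
          * B ^ (-((ℓ : ℝ) + 1))
        = Real.exp (-m) / (1 - Real.exp (-m)) *
            ((m * B⁻¹) ^ (ℓ + 1) / (Nat.factorial (ℓ + 1))) := by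
      intro ℓ
      have : B ^ (-((ℓ : ℝ) + 1)) = (B⁻¹) ^ (ℓ + 1) := by
        rw [show -((ℓ : ℝ) + 1) = -((ℓ + 1 : ℕ) : ℝ) by push_cast; ring,
          Real.rpow_neg hbp.le, Real.rpow_natCast, inv_pow]
      rw [this, mul_pow]
      ring
    rw [hζ]
    calc (∑' ℓ : ℕ, Real.exp (-m) / (1 - Real.exp (-m)) * m ^ (ℓ + 1) /
            (Nat.factorial (ℓ + 1)) * B ^ (-((ℓ : ℝ) + 1)))
        = ∑' ℓ : ℕ, Real.exp (-m) / (1 - Real.exp (-m)) *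
            ((m * B⁻¹) ^ (ℓ + 1) / (Nat.factorial (ℓ + 1))) := by
          exact tsum_congr hterm
      _ = Real.exp (-m) / (1 - Real.exp (-m)) *
            ∑' ℓ : ℕ, (m * B⁻¹) ^ (ℓ + 1) / (Nat.factorial (ℓ + 1)) := by
          exact tsum_mul_left
      _ = Real.exp (-m) / (1 - Real.exp (-m)) * (Real.exp (m * B⁻¹) - 1) := by
          rw [tsum_shift_exp]
      _ = (Real.exp (m * B⁻¹) - 1) / (Real.exp m - 1) := by
          have h1 : Real.exp (-m) < 1 := by
            rw [Real.exp_lt_one_iff]; linarith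
          have h2 : (1:ℝ) < Real.exp m := by
            rw [Real.one_lt_exp_iff]; exact hm
          have h3 : Real.exp m ≠ 0 := (Real.exp_pos m).ne'
          rw [Real.exp_neg]
          field_simp
  -- limits of the ingredients
  have hexp0 : Tendsto (fun t => Real.exp (α * t)) atTop (𝓝 0) := by
    apply Real.tendsto_exp_atBot.comp
    exact Tendsto.const_mul_atTop_of_neg hα tendsto_id
  have hμ0 : Tendsto μ atTop (𝓝 0) := by
    have : Tendsto (fun t => 2 * α * Real.exp (α * t) / (Real.exp (α * t) - 1)) atTop
        (𝓝 (2 * α * 0 / (0 - 1))) := by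
      exact Tendsto.div ((tendsto_const_nhds).mul hexp0) (hexp0.sub tendsto_const_nhds)
        (by norm_num)
    simpa [funext hμ] using this
  have hB : Tendsto (fun t => 1 + β t * φ) atTop (𝓝 (1 + -1 / (2 * α) * φ)) := by
    have hβ0 : Tendsto β atTop (𝓝 ((0 - 1) / (2 * α))) := by
      have : Tendsto (fun t => (Real.exp (α * t) - 1) / (2 * α)) atTop
          (𝓝 ((0 - 1) / (2 * α))) :=
        Tendsto.div (hexp0.sub tendsto_const_nhds) tendsto_const_nhds h2α.ne
      simpa [funext hβ] using this
    have := (tendsto_const_nhds (x := (1:ℝ))).add (hβ0.mul (tendsto_const_nhds (x := φ)))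
    simpa using this
  have hBpos : 0 < 1 + -1 / (2 * α) * φ := by
    have : 0 ≤ -1 / (2 * α) * φ := mul_nonneg (div_pos_of_neg_of_neg (by norm_num) h2α).le hφ
    linarith
  have hx : Tendsto (fun t => (1 + β t * φ)⁻¹) atTop (𝓝 ((1 + -1 / (2 * α) * φ)⁻¹)) :=
    hB.inv₀ hBpos.ne'
  have hL : (1 + -1 / (2 * α) * φ)⁻¹ = 2 * |α| / (φ + 2 * |α|) := by
    rw [abs_of_neg hα]
    have h1 : (0:ℝ) < φ + 2 * -α := by linarith
    have h2 : 1 + -1 / (2 * α) * φ = (φ + 2 * -α) / (2 * -α) := by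
      field_simp [hα.ne]
      ring
    rw [h2, inv_div]
  -- μ t → 0 within ≠ 0, and μ t * x t → 0 within ≠ 0
  have hμne : Tendsto μ atTop (𝓝[≠] 0) := by
    rw [tendsto_nhdsWithin_iff]
    refine ⟨hμ0, ?_⟩
    filter_upwards [eventually_gt_atTop 0] with t ht
    exact (hfacts t ht).1.ne'
  have hμxne : Tendsto (fun t => μ t * (1 + β t * φ)⁻¹) atTop (𝓝[≠] 0) := by
    rw [tendsto_nhdsWithin_iff]
    constructor
    · simpa using hμ0.mul hx
    · filter_upwards [eventually_gt_atTop 0] with t ht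
      obtain ⟨hm, hbp⟩ := hfacts t ht
      simp only [Set.mem_compl_iff, Set.mem_singleton_iff]
      exact (mul_pos hm (inv_pos.2 hbp)).ne'
  have hG1 : Tendsto (fun t => (Real.exp (μ t * (1 + β t * φ)⁻¹) - 1) /
      (μ t * (1 + β t * φ)⁻¹)) atTop (𝓝 1) := slope_exp.comp hμxne
  have hG2 : Tendsto (fun t => (Real.exp (μ t) - 1) / μ t) atTop (𝓝 1) := slope_exp.comp hμne
  -- assemble
  have hmain : Tendsto (fun t => (1 + β t * φ)⁻¹ *
      ((Real.exp (μ t * (1 + β t * φ)⁻¹) - 1) / (μ t * (1 + β t * φ)⁻¹)) /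
      ((Real.exp (μ t) - 1) / μ t)) atTop (𝓝 (2 * |α| / (φ + 2 * |α|))) := by
    have := ((hx.mul hG1).div hG2 one_ne_zero)
    rw [hL, mul_one, div_one] at this
    exact this
  refine Tendsto.congr' ?_ hmain
  filter_upwards [key, eventually_gt_atTop 0] with t ht htpos
  obtain ⟨hm, hbp⟩ := hfacts t htpos
  rw [ht]
  have hBne : (1 + β t * φ)⁻¹ ≠ 0 := (inv_pos.2 hbp).ne'
  have hexpne : Real.exp (μ t) - 1 ≠ 0 := by
    have : (1:ℝ) < Real.exp (μ t) := by rw [Real.one_lt_exp_iff]; exact hm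
    linarith
  field_simp
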